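/- Let H be a hypergraph, e an edge, and e = e' ∪ e'' a partition of e into two nonempty disjoint parts. Then |E(H) - E(H ◁ e)| ≤ 2√(|e'||e''|), where H ◁ e is the multi-hypergraph obtained by replacing the edge e by the two edges e' and e''. -/

import Mathlib

open Matrix BigOperators

set_option linter.unusedSectionVars false

variable {V : Type*} [Fintype V] [DecidableEq V]

/-- Adjacency matrix of a (multi-)hypergraph given by its multiset of edges:
entry `(i,j)` is the number of edges containing both `i` and `j`, with zero diagonal. -/
def adjacencyMatrix (E : Multiset (Finset V)) : Matrix V V ℝ :=
  Matrix.of fun i j => if i = j then 0 else ((E.filter (fun e => i ∈ e ∧ j ∈ e)).card : ℝ)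

lemma adjacency_isHermitian (E : Multiset (Finset V)) : (adjacencyMatrix E).IsHermitian := by
  unfold Matrix.IsHermitian
  ext i j
  by_cases h : i = j
  · subst h; simp [adjacencyMatrix]
  · simp only [adjacencyMatrix, Matrix.conjTranspose_apply, Matrix.of_apply, h, Ne.symm h,
      if_false, star_trivial]
    congr 1
    exact congrArg Multiset.card (Multiset.filter_congr (fun e _ => and_comm))

/-- Energy of a (multi-)hypergraph: sum of the absolute values of the adjacency eigenvalues. -/
noncomputable def energy (E : Multiset (Finset V)) : ℝ :=
  ∑ i, |(adjacency_isHermitian E).eigenvalues i|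

/-- Degree of a vertex: the number of edges containing it. -/
def hdegree (E : Multiset (Finset V)) (v : V) : ℕ := (E.filter (fun e => v ∈ e)).card

/-- Zagreb index: sum of squares of vertex degrees. -/
def zagreb (E : Multiset (Finset V)) : ℕ := ∑ v, (hdegree E v)^2

namespace Stmt15

variable {n : Type*} [Fintype n] [DecidableEq n]

noncomputable def sgn (x : ℝ) : ℝ := if 0 ≤ x then 1 else -1

lemma sgn_mul (x : ℝ) : sgn x * x = |x| := by
  unfold sgn
  split
  · rw [one_mul, abs_of_nonneg ‹_›]
  · rw [neg_one_mul, abs_of_neg (lt_of_not_ge ‹_›)]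

lemma sgn_sq (x : ℝ) : sgn x * sgn x = 1 := by
  unfold sgn; split <;> norm_num

lemma abs_sgn (x : ℝ) : |sgn x| = 1 := by
  unfold sgn; split <;> norm_num

/-- The "sign" of a Hermitian real matrix. -/
noncomputable def signM {A : Matrix n n ℝ} (hA : A.IsHermitian) : Matrix n n ℝ :=
  (hA.eigenvectorUnitary : Matrix n n ℝ) *
    Matrix.diagonal (fun i => sgn (hA.eigenvalues i)) *
    star (hA.eigenvectorUnitary : Matrix n n ℝ)

lemma spectral (A : Matrix n n ℝ) (hA : A.IsHermitian) :
    A = (hA.eigenvectorUnitary : Matrix n n ℝ) * Matrix.diagonal hA.eigenvalues *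
      star (hA.eigenvectorUnitary : Matrix n n ℝ) := by
  have := hA.spectral_theorem
  rwa [RCLike.ofReal_real_eq_id, Function.id_comp] at this

lemma diag_conj (A : Matrix n n ℝ) (hA : A.IsHermitian) :
    star (hA.eigenvectorUnitary : Matrix n n ℝ) * A * (hA.eigenvectorUnitary : Matrix n n ℝ)
      = Matrix.diagonal hA.eigenvalues := by
  have := hA.conjStarAlgAut_star_eigenvectorUnitary
  rw [Unitary.conjStarAlgAut_apply, RCLike.ofReal_real_eq_id, Function.id_comp] at this
  simpa using this

lemma trace_mul_diagonal (M : Matrix n n ℝ) (d : n → ℝ) :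
    Matrix.trace (M * Matrix.diagonal d) = ∑ j, M j j * d j := by
  simp [Matrix.trace, Matrix.diag, Matrix.mul_diagonal]

/-- trace of sign(A) * B is at most the energy of B. -/
lemma trace_sign_mul_le (A B : Matrix n n ℝ) (hA : A.IsHermitian) (hB : B.IsHermitian) :
    Matrix.trace (signM hA * B) ≤ ∑ i, |hB.eigenvalues i| := by
  set U : Matrix n n ℝ := (hA.eigenvectorUnitary : Matrix n n ℝ) with hU
  set W : Matrix n n ℝ := (hB.eigenvectorUnitary : Matrix n n ℝ) with hW
  have hUU : U * star U = 1 := Matrix.mem_unitaryGroup_iff.mp (hA.eigenvectorUnitary).2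
  have hWW' : star W * W = 1 := Matrix.mem_unitaryGroup_iff'.mp (hB.eigenvectorUnitary).2
  set ε : n → ℝ := fun i => sgn (hA.eigenvalues i) with hε
  set μ : n → ℝ := hB.eigenvalues with hμ
  set P : Matrix n n ℝ := star U * W with hP
  have hPunit : star P * P = 1 := by
    rw [hP, StarMul.star_mul, star_star]
    simp only [← Matrix.mul_assoc]
    rw [Matrix.mul_assoc (star W), hUU, Matrix.mul_one, hWW']
  have hPcol : ∀ j, ∑ k, P k j * P k j = 1 := by
    intro j
    have := congrFun (congrFun hPunit j) j
    simpa [Matrix.mul_apply, Matrix.one_apply, Matrix.conjTranspose_apply] using this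
  have hTr : Matrix.trace (signM hA * B) =
      ∑ j, (∑ k, P k j * (ε k * P k j)) * μ j := by
    conv_lhs => rw [signM, spectral B hB]
    have assoc1 : U * Matrix.diagonal ε * star U * (W * Matrix.diagonal μ * star W)
        = (U * Matrix.diagonal ε * star U * (W * Matrix.diagonal μ)) * star W := by
      simp only [Matrix.mul_assoc]
    rw [assoc1, Matrix.trace_mul_comm]
    have assoc2 : star W * (U * Matrix.diagonal ε * star U * (W * Matrix.diagonal μ))
        = (star P * Matrix.diagonal ε * P) * Matrix.diagonal μ := by
      rw [hP, StarMul.star_mul, star_star]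
      simp only [Matrix.mul_assoc]
    rw [assoc2, trace_mul_diagonal]
    congr 1
    funext j
    congr 1
    simp only [Matrix.mul_apply, Matrix.conjTranspose_apply, Matrix.star_apply, star_trivial,
      Matrix.diagonal_apply, mul_ite, mul_zero, ite_mul, zero_mul,
      Finset.sum_ite_eq', Finset.mem_univ, if_true]
    exact Finset.sum_congr rfl fun k _ => by ring
  rw [hTr]
  calc ∑ j, (∑ k, P k j * (ε k * P k j)) * μ j
      ≤ ∑ j, |(∑ k, P k j * (ε k * P k j)) * μ j| :=
        Finset.sum_le_sum fun j _ => le_abs_self _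
    _ ≤ ∑ j, |μ j| := by
        apply Finset.sum_le_sum
        intro j _
        rw [abs_mul]
        have h1 : |∑ k, P k j * (ε k * P k j)| ≤ 1 := by
          calc |∑ k, P k j * (ε k * P k j)| ≤ ∑ k, |P k j * (ε k * P k j)| :=
                Finset.abs_sum_le_sum_abs _ _
            _ = ∑ k, P k j * P k j := by
                apply Finset.sum_congr rfl
                intro k _
                rw [abs_mul, abs_mul, abs_sgn, one_mul, ← abs_mul, abs_mul_self]
            _ = 1 := hPcol j
        calc |∑ k, P k j * (ε k * P k j)| * |μ j| ≤ 1 * |μ j| :=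
              mul_le_mul_of_nonneg_right h1 (abs_nonneg _)
          _ = |μ j| := one_mul _

/-- trace of sign(A) * A equals the energy of A. -/
lemma trace_sign_mul_self (A : Matrix n n ℝ) (hA : A.IsHermitian) :
    Matrix.trace (signM hA * A) = ∑ i, |hA.eigenvalues i| := by
  set U : Matrix n n ℝ := (hA.eigenvectorUnitary : Matrix n n ℝ) with hU
  have hUU : U * star U = 1 := Matrix.mem_unitaryGroup_iff.mp (hA.eigenvectorUnitary).2
  set ε : n → ℝ := fun i => sgn (hA.eigenvalues i) with hε
  set μ : n → ℝ := hA.eigenvalues with hμ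
  have hUA : star U * A = Matrix.diagonal μ * star U := by
    calc star U * A = star U * A * (U * star U) := by rw [hUU, Matrix.mul_one]
      _ = (star U * A * U) * star U := by simp only [Matrix.mul_assoc]
      _ = Matrix.diagonal μ * star U := by rw [diag_conj A hA]
  have key : signM hA * A = U * (Matrix.diagonal ε * Matrix.diagonal μ) * star U := by
    rw [signM]
    calc U * Matrix.diagonal ε * star U * A
        = U * Matrix.diagonal ε * (star U * A) := by simp only [Matrix.mul_assoc]
      _ = U * Matrix.diagonal ε * (Matrix.diagonal μ * star U) := by rw [hUA]
      _ = U * (Matrix.diagonal ε * Matrix.diagonal μ) * star U := by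
          simp only [Matrix.mul_assoc]
  have h1 : star U * U = 1 := Matrix.mem_unitaryGroup_iff'.mp (hA.eigenvectorUnitary).2
  rw [key, Matrix.trace_mul_comm, ← Matrix.mul_assoc, h1, Matrix.one_mul, Matrix.diagonal_mul_diagonal, Matrix.trace_diagonal]
  exact Finset.sum_congr rfl fun i _ => sgn_mul _

lemma signM_transpose_mul_self (A : Matrix n n ℝ) (hA : A.IsHermitian) :
    (signM hA)ᵀ * signM hA = 1 := by
  set U : Matrix n n ℝ := (hA.eigenvectorUnitary : Matrix n n ℝ) with hU
  have hUU : U * star U = 1 := Matrix.mem_unitaryGroup_iff.mp (hA.eigenvectorUnitary).2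
  have hUU' : star U * U = 1 := Matrix.mem_unitaryGroup_iff'.mp (hA.eigenvectorUnitary).2
  set ε : n → ℝ := fun i => sgn (hA.eigenvalues i) with hε
  have hstar : star (signM hA) = signM hA := by
    rw [signM, StarMul.star_mul, StarMul.star_mul, star_star]
    have hd : star (Matrix.diagonal ε) = Matrix.diagonal ε := by
      rw [Matrix.star_eq_conjTranspose, Matrix.diagonal_conjTranspose]
      simp
    rw [hd, Matrix.mul_assoc]
  have ht : (signM hA)ᵀ = signM hA := by
    rw [← Matrix.conjTranspose_eq_transpose_of_trivial, ← Matrix.star_eq_conjTranspose, hstar]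
  rw [ht, signM]
  calc (U * Matrix.diagonal ε * star U) * (U * Matrix.diagonal ε * star U)
      = U * (Matrix.diagonal ε * ((star U * U) * (Matrix.diagonal ε * star U))) := by
        simp only [Matrix.mul_assoc]
    _ = U * ((Matrix.diagonal ε * Matrix.diagonal ε) * star U) := by
        rw [hUU', Matrix.one_mul, Matrix.mul_assoc]
    _ = 1 := by
        rw [Matrix.diagonal_mul_diagonal]
        have hone : Matrix.diagonal (fun i => ε i * ε i) = (1 : Matrix n n ℝ) := by
          rw [show (fun i => ε i * ε i) = fun _ => (1:ℝ) from funext fun i => sgn_sq _,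
            Matrix.diagonal_one]
        rw [hone, Matrix.one_mul, hUU]

lemma mulVec_norm_sq (S : Matrix n n ℝ) (hS : Sᵀ * S = 1) (x : n → ℝ) :
    ∑ i, (S *ᵥ x) i ^ 2 = ∑ i, x i ^ 2 := by
  have h : (S *ᵥ x) ⬝ᵥ (S *ᵥ x) = x ⬝ᵥ x := by
    rw [Matrix.dotProduct_mulVec, ← Matrix.mulVec_transpose, Matrix.mulVec_mulVec, hS,
      Matrix.one_mulVec]
  simpa [dotProduct, pow_two] using h

lemma trace_sign_rank2 (S : Matrix n n ℝ) (hS : Sᵀ * S = 1) (x y : n → ℝ) :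
    Matrix.trace (S * Matrix.of (fun i j => x i * y j + y i * x j)) ≤
      2 * Real.sqrt ((∑ i, x i ^ 2) * (∑ i, y i ^ 2)) := by
  have hTr : Matrix.trace (S * Matrix.of (fun i j => x i * y j + y i * x j))
      = ∑ i, (S *ᵥ x) i * y i + ∑ i, (S *ᵥ y) i * x i := by
    rw [← Finset.sum_add_distrib]
    simp only [Matrix.trace, Matrix.diag, Matrix.mul_apply, Matrix.of_apply, Matrix.mulVec,
      dotProduct]
    apply Finset.sum_congr rfl
    intro i _
    rw [Finset.sum_mul, Finset.sum_mul, ← Finset.sum_add_distrib]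
    apply Finset.sum_congr rfl
    intro k _
    ring
  rw [hTr]
  have hb1 : ∑ i, (S *ᵥ x) i * y i ≤
      Real.sqrt (∑ i, x i ^ 2) * Real.sqrt (∑ i, y i ^ 2) := by
    calc ∑ i, (S *ᵥ x) i * y i
        ≤ Real.sqrt (∑ i, (S *ᵥ x) i ^ 2) * Real.sqrt (∑ i, y i ^ 2) :=
          Real.sum_mul_le_sqrt_mul_sqrt _ _ _
      _ = _ := by rw [mulVec_norm_sq S hS x]
  have hb2 : ∑ i, (S *ᵥ y) i * x i ≤
      Real.sqrt (∑ i, x i ^ 2) * Real.sqrt (∑ i, y i ^ 2) := by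
    calc ∑ i, (S *ᵥ y) i * x i
        ≤ Real.sqrt (∑ i, (S *ᵥ y) i ^ 2) * Real.sqrt (∑ i, x i ^ 2) :=
          Real.sum_mul_le_sqrt_mul_sqrt _ _ _
      _ = _ := by rw [mulVec_norm_sq S hS y, mul_comm]
  rw [Real.sqrt_mul (Finset.sum_nonneg fun i _ => sq_nonneg _)]
  linarith

/-- Key perturbation bound. -/
lemma energy_sub_le (X Y : Matrix n n ℝ) (hX : X.IsHermitian) (hY : Y.IsHermitian)
    (x y : n → ℝ) (hXY : X = Y + Matrix.of (fun i j => x i * y j + y i * x j)) :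
    ∑ i, |hX.eigenvalues i| - ∑ i, |hY.eigenvalues i| ≤
      2 * Real.sqrt ((∑ i, x i ^ 2) * (∑ i, y i ^ 2)) := by
  have h1 : ∑ i, |hX.eigenvalues i| = Matrix.trace (signM hX * X) :=
    (trace_sign_mul_self X hX).symm
  have h2 : Matrix.trace (signM hX * Y) +
      Matrix.trace (signM hX * Matrix.of (fun i j => x i * y j + y i * x j)) =
      Matrix.trace (signM hX * X) := by
    rw [← Matrix.trace_add, ← Matrix.mul_add, ← hXY]
  have h3 := trace_sign_mul_le X Y hX hY
  have h4 := trace_sign_rank2 (signM hX) (signM_transpose_mul_self X hX) x y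
  linarith [h1, h2, h3, h4]

end Stmt15


/-- dividing an edge `e` into two nonempty disjoint parts `e'` and `e''`
changes the energy by at most `2√(|e'||e''|)`. -/
theorem stmt_15 (E : Finset (Finset V)) (hcard : ∀ f ∈ E, 2 ≤ f.card)
    (e e' e'' : Finset V) (he : e ∈ E)
    (hne' : e'.Nonempty) (hne'' : e''.Nonempty) (hdisj : Disjoint e' e'')
    (hsplit : e = e' ∪ e'') :
    |energy E.val - energy (e' ::ₘ e'' ::ₘ (E.erase e).val)| ≤
      2 * Real.sqrt ((e'.card : ℝ) * (e''.card : ℝ)) := by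
  classical
  have hA : (adjacencyMatrix E.val).IsHermitian := adjacency_isHermitian _
  have hB : (adjacencyMatrix (e' ::ₘ e'' ::ₘ (E.erase e).val)).IsHermitian :=
    adjacency_isHermitian _
  have hnd : ∀ v, v ∈ e' → v ∉ e'' := fun v hv => Finset.disjoint_left.mp hdisj hv
  have hEval : E.val = e ::ₘ (E.erase e).val := by
    rw [Finset.erase_val]
    exact (Multiset.cons_erase (Finset.mem_val.mpr he)).symm
  have hAB : adjacencyMatrix E.val = adjacencyMatrix (e' ::ₘ e'' ::ₘ (E.erase e).val) +
      Matrix.of (fun i j => (fun k => if k ∈ e' then (1:ℝ) else 0) i *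
        (fun k => if k ∈ e'' then (1:ℝ) else 0) j +
        (fun k => if k ∈ e'' then (1:ℝ) else 0) i *
        (fun k => if k ∈ e' then (1:ℝ) else 0) j) := by
    ext i j
    by_cases hij : i = j
    · subst hij
      simp only [adjacencyMatrix, Matrix.add_apply, Matrix.of_apply, if_pos rfl]
      by_cases hi' : i ∈ e' <;> by_cases hi'' : i ∈ e''
      all_goals first
        | exact absurd hi'' (hnd i hi')
        | (simp only [hi', hi'', if_true, if_false]; norm_num)
    · simp only [adjacencyMatrix, Matrix.add_apply, Matrix.of_apply, if_neg hij]
      rw [hEval]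
      subst hsplit
      simp only [Multiset.filter_cons, Multiset.card_add, apply_ite Multiset.card,
        Multiset.card_singleton, Multiset.card_zero]
      push_cast
      by_cases hi' : i ∈ e' <;> by_cases hi'' : i ∈ e'' <;>
        by_cases hj' : j ∈ e' <;> by_cases hj'' : j ∈ e''
      all_goals first
        | exact absurd hi'' (hnd i hi')
        | exact absurd hj'' (hnd j hj')
        | (simp only [hi', hi'', hj', hj'', Finset.mem_union, if_true, if_false,
            and_true, true_and, and_false, false_and, or_true, true_or, or_false, false_or,
            not_true, not_false_iff]; first | ring | norm_num)
  have hBA : adjacencyMatrix (e' ::ₘ e'' ::ₘ (E.erase e).val) = adjacencyMatrix E.val +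
      Matrix.of (fun i j => (fun k => -(if k ∈ e' then (1:ℝ) else 0)) i *
        (fun k => if k ∈ e'' then (1:ℝ) else 0) j +
        (fun k => if k ∈ e'' then (1:ℝ) else 0) i *
        (fun k => -(if k ∈ e' then (1:ℝ) else 0)) j) := by
    rw [hAB]
    ext i j
    simp only [Matrix.add_apply, Matrix.of_apply]
    ring
  have hx2 : ∑ i, (if i ∈ e' then (1:ℝ) else 0) ^ 2 = (e'.card : ℝ) := by
    simp [ite_pow, Finset.sum_ite_mem, Finset.univ_inter]
  have hy2 : ∑ i, (if i ∈ e'' then (1:ℝ) else 0) ^ 2 = (e''.card : ℝ) := by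
    simp [ite_pow, Finset.sum_ite_mem, Finset.univ_inter]
  have h1 := Stmt15.energy_sub_le _ _ hA hB
    (fun k => if k ∈ e' then (1:ℝ) else 0) (fun k => if k ∈ e'' then (1:ℝ) else 0) hAB
  have h2 := Stmt15.energy_sub_le _ _ hB hA
    (fun k => -(if k ∈ e' then (1:ℝ) else 0)) (fun k => if k ∈ e'' then (1:ℝ) else 0) hBA
  rw [hx2, hy2] at h1
  rw [show ∑ i, (-(if i ∈ e' then (1:ℝ) else 0)) ^ 2 = (e'.card : ℝ) by
    simpa [neg_sq] using hx2, hy2] at h2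
  have hE1 : energy E.val = ∑ i, |hA.eigenvalues i| := rfl
  have hE2 : energy (e' ::ₘ e'' ::ₘ (E.erase e).val) = ∑ i, |hB.eigenvalues i| := rfl
  rw [abs_sub_le_iff]
  exact ⟨by rw [hE1, hE2]; exact h1, by rw [hE1, hE2]; exact h2⟩
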